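/- Let (X, ρ, μ*) be a metric measure space with μ*(B(x,r)) ≤ c₁ r^q for all x, r (so μ* is 0-regular). Let S > q, N ≥ 1, and Φ_N satisfy |Φ_N(x,y)| ≤ A N^q / max(1,(N ρ(x,y))^S). Then for every bounded measurable g : X → ℝ, sup_{x ∈ X} ∫_X |Φ_N(x,y)| |g(y)| dμ*(y) ≤ C·A·c₁·‖g‖_∞, with C depending only on q and S. -/

import Mathlib

open MeasureTheory Metric
open scoped ENNReal

/-- Lebesgue-type bound against a bounded density: if `μ*(B(x,r)) ≤ c₁ r^q` and `Φ_N` is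
localized, then `sup_x ∫ |Φ_N(x,y)||g(y)| dμ*(y) ≤ C·A·c₁·‖g‖_∞`. -/
theorem stmt4 (q S : ℝ) (hq : 0 < q) (hqS : q < S) :
    ∃ C : ℝ, 0 < C ∧
      ∀ (X : Type) [MetricSpace X] [MeasurableSpace X]
        (μ : Measure X) (c₁ : ℝ), 0 < c₁ →
        (∀ (x : X) (r : ℝ), 0 < r → μ (closedBall x r) ≤ ENNReal.ofReal (c₁ * r ^ q)) →
        ∀ (N A : ℝ), 1 ≤ N → 0 < A →
        ∀ (Φ : X → X → ℝ),
        (∀ x y, |Φ x y| ≤ A * N ^ q / max 1 ((N * dist x y) ^ S)) →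
        ∀ (g : X → ℝ), Measurable g →
        ∀ (G : ℝ), (∀ y, |g y| ≤ G) →
        ∀ x : X,
        ∫⁻ y, ENNReal.ofReal (|Φ x y| * |g y|) ∂μ ≤ ENNReal.ofReal (C * A * c₁ * G) := by
  classical
  have hS : 0 < S := hq.trans hqS
  have h2S : (1:ℝ) ≤ (2:ℝ) ^ S := by
    have := Real.rpow_le_rpow_of_exponent_le (one_le_two) hS.le (x := (2:ℝ)) (y := 0)
    simpa [Real.rpow_zero] using this
  have h2Spos : (0:ℝ) < (2:ℝ) ^ S := lt_of_lt_of_le one_pos h2S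
  set ρ : ℝ := (2:ℝ) ^ (q - S) with hρdef
  have hρ0 : 0 < ρ := Real.rpow_pos_of_pos two_pos _
  have hρ1 : ρ < 1 := Real.rpow_lt_one_of_one_lt_of_neg one_lt_two (by linarith)
  have hC : (0:ℝ) < (2:ℝ) ^ S * (1 - ρ)⁻¹ := by
    apply mul_pos h2Spos
    rw [inv_pos]; linarith
  refine ⟨(2:ℝ) ^ S * (1 - ρ)⁻¹, hC, ?_⟩
  intro X _ _ μ c₁ hc₁ hμ N A hN hA Φ hΦ g hg G hG x
  have hNpos : (0:ℝ) < N := lt_of_lt_of_le one_pos hN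
  have hG0 : 0 ≤ G := (abs_nonneg _).trans (hG x)
  have hNq : (0:ℝ) < N ^ q := Real.rpow_pos_of_pos hNpos _
  -- the measurable hulls of the dyadic closed balls
  set t : ℕ → Set X := fun k => MeasureTheory.toMeasurable μ (closedBall x ((2:ℝ) ^ k / N))
    with ht
  have htm : ∀ k, MeasurableSet (t k) := fun k => measurableSet_toMeasurable _ _
  have htsub : ∀ k, closedBall x ((2:ℝ) ^ k / N) ⊆ t k :=
    fun k => subset_toMeasurable _ _
  have htμ : ∀ k, μ (t k) ≤ ENNReal.ofReal (c₁ * ((2:ℝ) ^ k / N) ^ q) := by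
    intro k
    rw [ht]
    rw [measure_toMeasurable]
    exact hμ x _ (by positivity)
  set D : ℝ := G * A * N ^ q * (2:ℝ) ^ S with hD
  have hD0 : 0 ≤ D := by positivity
  set rr : ℝ := ((2:ℝ) ^ S)⁻¹ with hrr
  have hrr0 : 0 ≤ rr := by positivity
  -- the measurable majorant
  set h : X → ℝ≥0∞ := fun y => ∑' k : ℕ, (t k).indicator
    (fun _ => ENNReal.ofReal (D * rr ^ k)) y with hhdef
  -- pointwise bound
  have hpoint : ∀ y, ENNReal.ofReal (|Φ x y| * |g y|) ≤ h y := by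
    intro y
    have hex : ∃ k : ℕ, dist x y ≤ (2:ℝ) ^ k / N := by
      obtain ⟨k, hk⟩ := pow_unbounded_of_one_lt (N * dist x y) (one_lt_two (α := ℝ))
      exact ⟨k, by rw [le_div_iff₀ hNpos]; linarith [hk]⟩
    obtain ⟨k₀, hk₀, hmin⟩ : ∃ k : ℕ, dist x y ≤ (2:ℝ) ^ k / N ∧
        ∀ j < k, ¬ dist x y ≤ (2:ℝ) ^ j / N :=
      ⟨Nat.find hex, Nat.find_spec hex, fun j hj => Nat.find_min hex hj⟩
    have hmem : y ∈ t k₀ := htsub k₀ (by simpa [mem_closedBall, dist_comm] using hk₀)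
    have key : |Φ x y| * |g y| ≤ D * rr ^ k₀ := by
      have hgy : |g y| ≤ G := hG y
      have hΦy := hΦ x y
      have hmax1 : (1:ℝ) ≤ max 1 ((N * dist x y) ^ S) := le_max_left _ _
      have hmaxpos : (0:ℝ) < max 1 ((N * dist x y) ^ S) := lt_of_lt_of_le one_pos hmax1
      have hΦ0 : 0 ≤ |Φ x y| := abs_nonneg _
      have hstep : |Φ x y| ≤ A * N ^ q * ((2:ℝ) ^ S * rr ^ k₀) := by
        rcases Nat.eq_zero_or_pos k₀ with h0 | hpos
        · have h1 : |Φ x y| ≤ A * N ^ q := by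
            calc |Φ x y| ≤ A * N ^ q / max 1 ((N * dist x y) ^ S) := hΦy
            _ ≤ A * N ^ q / 1 := by
                apply div_le_div_of_nonneg_left (by positivity) one_pos hmax1
            _ = A * N ^ q := by ring
          calc |Φ x y| ≤ A * N ^ q := h1
          _ ≤ A * N ^ q * ((2:ℝ) ^ S * rr ^ k₀) := by
              nth_rewrite 1 [← mul_one (A * N ^ q)]
              apply mul_le_mul_of_nonneg_left _ (by positivity)
              rw [h0, pow_zero, mul_one]
              exact h2S
        · obtain ⟨k, rfl⟩ : ∃ k, k₀ = k + 1 := ⟨k₀ - 1, (Nat.succ_pred_eq_of_pos hpos).symm⟩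
          have hnot : ¬ dist x y ≤ (2:ℝ) ^ k / N := hmin k (Nat.lt_succ_self k)
          have hdk : (2:ℝ) ^ k / N < dist x y := lt_of_not_ge hnot
          have hNd : (2:ℝ) ^ k < N * dist x y := by
            rw [div_lt_iff₀ hNpos] at hdk; linarith
          have h2k : (0:ℝ) < (2:ℝ) ^ k := by positivity
          have hpow : ((2:ℝ) ^ S) ^ k ≤ (N * dist x y) ^ S := by
            have h1 : ((2:ℝ) ^ k) ^ S ≤ (N * dist x y) ^ S :=
              Real.rpow_le_rpow (by positivity) hNd.le hS.le
            calc ((2:ℝ) ^ S) ^ k = (2:ℝ) ^ (S * k) := by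
                  rw [← Real.rpow_natCast ((2:ℝ) ^ S) k, ← Real.rpow_mul (by norm_num)]
            _ = ((2:ℝ) ^ k) ^ S := by
                  rw [← Real.rpow_natCast (2:ℝ) k, ← Real.rpow_mul (by norm_num),
                    mul_comm]
            _ ≤ (N * dist x y) ^ S := h1
          have hmaxge : ((2:ℝ) ^ S) ^ k ≤ max 1 ((N * dist x y) ^ S) :=
            hpow.trans (le_max_right _ _)
          have h2Sk : (0:ℝ) < ((2:ℝ) ^ S) ^ k := by positivity
          calc |Φ x y| ≤ A * N ^ q / max 1 ((N * dist x y) ^ S) := hΦy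
          _ ≤ A * N ^ q / ((2:ℝ) ^ S) ^ k := by
              apply div_le_div_of_nonneg_left (by positivity) h2Sk hmaxge
          _ = A * N ^ q * ((2:ℝ) ^ S * rr ^ (k + 1)) := by
              rw [hrr, pow_succ', ← mul_assoc ((2:ℝ) ^ S), mul_inv_cancel₀ h2Spos.ne', one_mul,
                inv_pow, div_eq_mul_inv]
      calc |Φ x y| * |g y| ≤ (A * N ^ q * ((2:ℝ) ^ S * rr ^ k₀)) * G :=
            mul_le_mul hstep hgy (abs_nonneg _) (by positivity)
      _ = D * rr ^ k₀ := by rw [hD]; ring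
    calc ENNReal.ofReal (|Φ x y| * |g y|) ≤ ENNReal.ofReal (D * rr ^ k₀) :=
          ENNReal.ofReal_le_ofReal key
    _ = (t k₀).indicator (fun _ => ENNReal.ofReal (D * rr ^ k₀)) y := by
          rw [Set.indicator_of_mem hmem]
    _ ≤ h y := ENNReal.le_tsum k₀
  -- integrate
  have hint : ∫⁻ y, h y ∂μ = ∑' k : ℕ, ENNReal.ofReal (D * rr ^ k) * μ (t k) := by
    rw [hhdef, lintegral_tsum (fun k => (measurable_const.indicator (htm k)).aemeasurable)]
    congr 1
    ext k
    exact lintegral_indicator_const (htm k) _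
  have hsum : ∑' k : ℕ, ENNReal.ofReal (D * rr ^ k) * μ (t k) ≤
      ENNReal.ofReal ((2:ℝ) ^ S * (1 - ρ)⁻¹ * A * c₁ * G) := by
    have hterm : ∀ k : ℕ, ENNReal.ofReal (D * rr ^ k) * μ (t k) ≤
        ENNReal.ofReal (G * A * c₁ * (2:ℝ) ^ S) * ENNReal.ofReal ρ ^ k := by
      intro k
      calc ENNReal.ofReal (D * rr ^ k) * μ (t k)
          ≤ ENNReal.ofReal (D * rr ^ k) * ENNReal.ofReal (c₁ * ((2:ℝ) ^ k / N) ^ q) :=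
            mul_le_mul_right (htμ k) _
      _ = ENNReal.ofReal ((D * rr ^ k) * (c₁ * ((2:ℝ) ^ k / N) ^ q)) :=
            (ENNReal.ofReal_mul (by positivity)).symm
      _ = ENNReal.ofReal (G * A * c₁ * (2:ℝ) ^ S * ρ ^ k) := by
            congr 1
            have hbq : ((2:ℝ) ^ k / N) ^ q = ((2:ℝ) ^ q) ^ k / N ^ q := by
              rw [Real.div_rpow (by positivity) hNpos.le]
              congr 1
              rw [← Real.rpow_natCast (2:ℝ) k, ← Real.rpow_mul (by norm_num),
                ← Real.rpow_natCast ((2:ℝ) ^ q) k, ← Real.rpow_mul (by norm_num),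
                mul_comm]
            have hρk : rr ^ k * ((2:ℝ) ^ q) ^ k = ρ ^ k := by
              rw [← mul_pow]
              congr 1
              rw [hrr, hρdef, ← Real.rpow_neg (by norm_num : (0:ℝ) ≤ 2),
                ← Real.rpow_add two_pos]
              ring_nf
            rw [hbq, hD]
            field_simp
            rw [mul_assoc, hρk]
      _ = ENNReal.ofReal (G * A * c₁ * (2:ℝ) ^ S) * ENNReal.ofReal ρ ^ k := by
            rw [ENNReal.ofReal_mul (by positivity), ENNReal.ofReal_pow hρ0.le]
    calc ∑' k : ℕ, ENNReal.ofReal (D * rr ^ k) * μ (t k)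
        ≤ ∑' k : ℕ, ENNReal.ofReal (G * A * c₁ * (2:ℝ) ^ S) * ENNReal.ofReal ρ ^ k :=
          ENNReal.tsum_le_tsum hterm
    _ = ENNReal.ofReal (G * A * c₁ * (2:ℝ) ^ S) * (1 - ENNReal.ofReal ρ)⁻¹ := by
          rw [ENNReal.tsum_mul_left, ENNReal.tsum_geometric]
    _ = ENNReal.ofReal ((2:ℝ) ^ S * (1 - ρ)⁻¹ * A * c₁ * G) := by
          rw [show (1 : ℝ≥0∞) - ENNReal.ofReal ρ = ENNReal.ofReal (1 - ρ) by
                rw [ENNReal.ofReal_sub _ hρ0.le, ENNReal.ofReal_one],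
            ← ENNReal.ofReal_inv_of_pos (by linarith),
            ← ENNReal.ofReal_mul (by positivity)]
          congr 1
          ring
  calc ∫⁻ y, ENNReal.ofReal (|Φ x y| * |g y|) ∂μ ≤ ∫⁻ y, h y ∂μ := lintegral_mono hpoint
  _ = ∑' k : ℕ, ENNReal.ofReal (D * rr ^ k) * μ (t k) := hint
  _ ≤ ENNReal.ofReal ((2:ℝ) ^ S * (1 - ρ)⁻¹ * A * c₁ * G) := hsum
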